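/- Let A ∈ ℚ^{n×n} be invertible, set B = A^{−1}, and assume b := [ℤ^n[B] : Bℤ^n[B]] is finite. Then for every k ≥ 1 the index of B^kℤ^n[B] in ℤ^n[B] equals b^k, and if ℰ ⊆ ℤ^n[B] is a complete set of coset representatives of ℤ^n[B]/Bℤ^n[B], then ℰ + Bℰ + ⋯ + B^{k−1}ℰ := { e₀ + Be₁ + ⋯ + B^{k−1}e_{k−1} : e_i ∈ ℰ } is a complete set of coset representatives of ℤ^n[B]/B^kℤ^n[B]. -/

import Mathlib

open Matrix

def intSpan (n : ℕ) (M : Matrix (Fin n) (Fin n) ℚ) : AddSubgroup (Fin n → ℚ) :=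
  AddSubgroup.closure {x | ∃ (j : ℕ) (z : Fin n → ℤ), x = (M ^ j) *ᵥ fun i => (z i : ℚ)}

noncomputable def idx (n : ℕ) (M : Matrix (Fin n) (Fin n) ℚ) : ℕ :=
  ((intSpan n M).map (Matrix.mulVecLin M).toAddMonoidHom).relIndex (intSpan n M)

section Aux

variable {n : ℕ} (B : Matrix (Fin n) (Fin n) ℚ)

lemma aux_map_le :
    (intSpan n B).map (Matrix.mulVecLin B).toAddMonoidHom ≤ intSpan n B := by
  rw [intSpan, AddMonoidHom.map_closure]
  apply AddSubgroup.closure_mono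
  rintro x ⟨y, ⟨j, z, rfl⟩, rfl⟩
  exact ⟨j + 1, z, by simp [Matrix.mulVec_mulVec, pow_succ']⟩

lemma aux_mem_mul {x : Fin n → ℚ} (hx : x ∈ intSpan n B) :
    B *ᵥ x ∈ intSpan n B :=
  aux_map_le B (AddSubgroup.mem_map.2 ⟨x, hx, rfl⟩)

lemma aux_mem_pow {x : Fin n → ℚ} (hx : x ∈ intSpan n B) (j : ℕ) :
    (B ^ j) *ᵥ x ∈ intSpan n B := by
  induction j with
  | zero => simpa using hx
  | succ m ih =>
    have := aux_mem_mul B ih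
    rwa [Matrix.mulVec_mulVec, ← pow_succ'] at this

lemma aux_map_id :
    AddSubgroup.map (LinearMap.id : (Fin n → ℚ) →ₗ[ℚ] (Fin n → ℚ)).toAddMonoidHom
      (intSpan n B) = intSpan n B := by
  ext x
  simp [AddSubgroup.mem_map]

lemma aux_relIndex_map {f : (Fin n → ℚ) →+ (Fin n → ℚ)} (hf : Function.Injective f)
    (H K : AddSubgroup (Fin n → ℚ)) : (H.map f).relIndex (K.map f) = H.relIndex K := by
  have := AddSubgroup.relIndex_comap (H := H.map f) f K
  rw [AddSubgroup.comap_map_eq_self_of_injective hf] at this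
  exact this.symm

lemma aux_succ (k : ℕ) :
    (intSpan n B).map (Matrix.mulVecLin (B ^ (k + 1))).toAddMonoidHom =
      ((intSpan n B).map (Matrix.mulVecLin (B ^ k)).toAddMonoidHom).map
        (Matrix.mulVecLin B).toAddMonoidHom := by
  rw [AddSubgroup.map_map]
  congr 1
  ext v
  simp [Matrix.mulVec_mulVec, pow_succ']

lemma aux_pow_le (k : ℕ) :
    (intSpan n B).map (Matrix.mulVecLin (B ^ k)).toAddMonoidHom ≤ intSpan n B := by
  induction k with
  | zero => rw [pow_zero, Matrix.mulVecLin_one, aux_map_id]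
  | succ m ih =>
    rw [aux_succ]
    exact le_trans (AddSubgroup.map_mono ih) (aux_map_le B)

lemma aux_inj (hB : IsUnit B.det) : Function.Injective ((Matrix.mulVecLin B).toAddMonoidHom) := by
  intro x y h
  have h1 : B⁻¹ * B = 1 := Matrix.nonsing_inv_mul B hB
  have : B⁻¹ *ᵥ (B *ᵥ x) = B⁻¹ *ᵥ (B *ᵥ y) := by
    simpa using congrArg (fun v => B⁻¹ *ᵥ v) h
  simpa [Matrix.mulVec_mulVec, h1] using this

lemma aux_index (hB : IsUnit B.det) (k : ℕ) :
    ((intSpan n B).map (Matrix.mulVecLin (B ^ k)).toAddMonoidHom).relIndex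
      (intSpan n B) = (idx n B) ^ k := by
  induction k with
  | zero =>
    rw [pow_zero, Matrix.mulVecLin_one, aux_map_id, AddSubgroup.relIndex_self, pow_zero]
  | succ m ih =>
    have hinj := aux_inj B hB
    have h1 : (intSpan n B).map (Matrix.mulVecLin (B ^ (m + 1))).toAddMonoidHom ≤
        (intSpan n B).map (Matrix.mulVecLin B).toAddMonoidHom := by
      rw [aux_succ]
      exact AddSubgroup.map_mono (aux_pow_le B m)
    have h2 := AddSubgroup.relIndex_mul_relIndex _ _ _ h1 (aux_map_le B)
    have h3 : ((intSpan n B).map (Matrix.mulVecLin (B ^ (m + 1))).toAddMonoidHom).relIndex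
        ((intSpan n B).map (Matrix.mulVecLin B).toAddMonoidHom) =
        ((intSpan n B).map (Matrix.mulVecLin (B ^ m)).toAddMonoidHom).relIndex (intSpan n B) := by
      rw [aux_succ]
      exact aux_relIndex_map hinj _ _
    rw [← h2, h3, ih, ← idx, pow_succ]

lemma aux_sum_succ (k : ℕ) (e : Fin (k + 1) → Fin n → ℚ) :
    ∑ i : Fin (k + 1), (B ^ (i : ℕ)) *ᵥ e i =
      e 0 + B *ᵥ ∑ i : Fin k, (B ^ (i : ℕ)) *ᵥ e i.succ := by
  rw [Fin.sum_univ_succ]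
  simp only [Fin.val_zero, pow_zero, Matrix.one_mulVec]
  congr 1
  rw [← Matrix.mulVecLin_apply, map_sum]
  refine Finset.sum_congr rfl fun i _ => ?_
  rw [Matrix.mulVecLin_apply, Matrix.mulVec_mulVec, ← pow_succ']
  rfl

lemma aux_T_sub (E : Set (Fin n → ℚ)) (hE : E ⊆ (intSpan n B : Set (Fin n → ℚ))) (k : ℕ) :
    {x : Fin n → ℚ | ∃ e : Fin k → Fin n → ℚ,
        (∀ i, e i ∈ E) ∧ x = ∑ i : Fin k, (B ^ (i : ℕ)) *ᵥ e i} ⊆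
      (intSpan n B : Set (Fin n → ℚ)) := by
  rintro x ⟨e, he, rfl⟩
  exact AddSubgroup.sum_mem _ fun i _ => aux_mem_pow B (hE (he i)) i

lemma aux_reps (hB : IsUnit B.det) (E : Set (Fin n → ℚ))
    (hE : E ⊆ (intSpan n B : Set (Fin n → ℚ)))
    (hrep : ∀ y ∈ intSpan n B, ∃! e, e ∈ E ∧
      y - e ∈ (intSpan n B).map (Matrix.mulVecLin B).toAddMonoidHom) :
    ∀ k : ℕ, 1 ≤ k → ∀ y ∈ intSpan n B, ∃! x,
      x ∈ {x : Fin n → ℚ | ∃ e : Fin k → Fin n → ℚ,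
        (∀ i, e i ∈ E) ∧ x = ∑ i : Fin k, (B ^ (i : ℕ)) *ᵥ e i} ∧
      y - x ∈ (intSpan n B).map (Matrix.mulVecLin (B ^ k)).toAddMonoidHom := by
  intro k hk
  induction k, hk using Nat.le_induction with
  | base =>
    intro y hy
    obtain ⟨e, ⟨heE, hye⟩, hu⟩ := hrep y hy
    refine ⟨e, ⟨⟨fun _ => e, fun _ => heE, by simp⟩, by rwa [pow_one]⟩, ?_⟩
    rintro x ⟨⟨f, hf, rfl⟩, hx⟩
    have h0 : ∑ i : Fin 1, (B ^ (i : ℕ)) *ᵥ f i = f 0 := by simp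
    rw [h0] at hx ⊢
    exact hu (f 0) ⟨hf 0, by rwa [pow_one] at hx⟩
  | succ m hm ih =>
    intro y hy
    obtain ⟨e0, ⟨he0E, hye0⟩, hu0⟩ := hrep y hy
    obtain ⟨y', hy'S, hy'⟩ := AddSubgroup.mem_map.mp hye0
    have hy'' : B *ᵥ y' = y - e0 := hy'
    obtain ⟨x', ⟨⟨e', he'E, hx'e⟩, hx'd⟩, hu'⟩ := ih y' hy'S
    have hx'S : x' ∈ intSpan n B := aux_T_sub B E hE m ⟨e', he'E, hx'e⟩
    have hle : (intSpan n B).map (Matrix.mulVecLin (B ^ (m + 1))).toAddMonoidHom ≤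
        (intSpan n B).map (Matrix.mulVecLin B).toAddMonoidHom := by
      rw [aux_succ]
      exact AddSubgroup.map_mono (aux_pow_le B m)
    refine ⟨e0 + B *ᵥ x', ⟨⟨Fin.cons e0 e', ?_, ?_⟩, ?_⟩, ?_⟩
    · intro i
      refine Fin.cases (by simpa) (fun j => by simpa using he'E j) i
    · rw [aux_sum_succ]
      simp [← hx'e]
    · have hEq : y - (e0 + B *ᵥ x') = B *ᵥ (y' - x') := by
        rw [Matrix.mulVec_sub, hy'']
        abel
      rw [hEq, aux_succ]
      exact AddSubgroup.mem_map.mpr ⟨y' - x', hx'd, rfl⟩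
    · rintro x ⟨⟨f, hfE, rfl⟩, hxd⟩
      rw [aux_sum_succ] at hxd ⊢
      set x₂ := ∑ i : Fin m, (B ^ (i : ℕ)) *ᵥ f i.succ with hx2
      have hx₂T : x₂ ∈ {x : Fin n → ℚ | ∃ e : Fin m → Fin n → ℚ,
          (∀ i, e i ∈ E) ∧ x = ∑ i : Fin m, (B ^ (i : ℕ)) *ᵥ e i} :=
        ⟨fun i => f i.succ, fun i => hfE i.succ, rfl⟩
      have hx₂S : x₂ ∈ intSpan n B := aux_T_sub B E hE m hx₂T
      have hBx₂ : B *ᵥ x₂ ∈ (intSpan n B).map (Matrix.mulVecLin B).toAddMonoidHom :=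
        AddSubgroup.mem_map.mpr ⟨x₂, hx₂S, rfl⟩
      have hf0 : f 0 = e0 := by
        apply hu0
        refine ⟨hfE 0, ?_⟩
        have hEq : y - f 0 = (y - (f 0 + B *ᵥ x₂)) + B *ᵥ x₂ := by abel
        rw [hEq]
        exact AddSubgroup.add_mem _ (hle hxd) hBx₂
      have hdiff : y' - x₂ ∈ (intSpan n B).map (Matrix.mulVecLin (B ^ m)).toAddMonoidHom := by
        have hEq : y - (f 0 + B *ᵥ x₂) = B *ᵥ (y' - x₂) := by
          rw [Matrix.mulVec_sub, hy'', hf0]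
          abel
        rw [hEq, aux_succ] at hxd
        obtain ⟨w, hw, hw'⟩ := AddSubgroup.mem_map.mp hxd
        have : w = y' - x₂ := aux_inj B hB hw'
        rwa [← this]
      have : x₂ = x' := hu' x₂ ⟨hx₂T, hdiff⟩
      rw [hf0, this]

end Aux

theorem stmt16 (n : ℕ) (A : Matrix (Fin n) (Fin n) ℚ) (hA : IsUnit A.det)
    -- `b = [ℤ^n[B] : Bℤ^n[B]]` is finite (nonzero index), where `B = A⁻¹`
    (hfin : idx n A⁻¹ ≠ 0) (k : ℕ) (hk : 1 ≤ k) :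
    -- the index of `B^k ℤ^n[B]` in `ℤ^n[B]` equals `b^k`
    ((intSpan n A⁻¹).map (Matrix.mulVecLin (A⁻¹ ^ k)).toAddMonoidHom).relIndex
        (intSpan n A⁻¹) = (idx n A⁻¹) ^ k ∧
    -- and if `E` is a complete set of coset representatives of `ℤ^n[B]/Bℤ^n[B]`, then
    -- `E + BE + ⋯ + B^{k-1}E` is a complete set of coset representatives of `ℤ^n[B]/B^kℤ^n[B]`
    (∀ E : Set (Fin n → ℚ), E ⊆ (intSpan n A⁻¹ : Set (Fin n → ℚ)) →
      (∀ y ∈ intSpan n A⁻¹, ∃! e, e ∈ E ∧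
        y - e ∈ (intSpan n A⁻¹).map (Matrix.mulVecLin A⁻¹).toAddMonoidHom) →
      ({x : Fin n → ℚ | ∃ e : Fin k → Fin n → ℚ,
          (∀ i, e i ∈ E) ∧ x = ∑ i : Fin k, (A⁻¹ ^ (i : ℕ)) *ᵥ e i} ⊆
        (intSpan n A⁻¹ : Set (Fin n → ℚ))) ∧
      ∀ y ∈ intSpan n A⁻¹, ∃! x,
        x ∈ {x : Fin n → ℚ | ∃ e : Fin k → Fin n → ℚ,
          (∀ i, e i ∈ E) ∧ x = ∑ i : Fin k, (A⁻¹ ^ (i : ℕ)) *ᵥ e i} ∧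
        y - x ∈ (intSpan n A⁻¹).map (Matrix.mulVecLin (A⁻¹ ^ k)).toAddMonoidHom) := by
  have hB : IsUnit (A⁻¹).det := by
    rw [Matrix.det_nonsing_inv, Ring.inverse_eq_inv']
    exact isUnit_iff_ne_zero.mpr (inv_ne_zero (isUnit_iff_ne_zero.mp hA))
  exact ⟨aux_index A⁻¹ hB k, fun E hE hrep =>
    ⟨aux_T_sub A⁻¹ E hE k, aux_reps A⁻¹ hB E hE hrep k hk⟩⟩
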